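/- For every n ≥ 2 and every k ∈ {1,…,n}, the coordinate derivation ∂/∂zₖ belongs to the smallest Lie subalgebra of the derivations of ℂ[z₁,…,zₙ] containing U, V′ and V″. -/

import Mathlib

open MvPolynomial

/-- The polynomial vector field `f ∂/∂zₖ`: the derivation of `ℂ[z₁,…,zₙ]`
sending the coordinate `zₖ` to `f` and all other coordinates to `0`. -/
noncomputable def der (n : ℕ) (f : MvPolynomial (Fin n) ℂ) (k : Fin n) :
    Derivation ℂ (MvPolynomial (Fin n) ℂ) (MvPolynomial (Fin n) ℂ) :=
  MvPolynomial.mkDerivation ℂ (Pi.single k f)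

/-- `U = ∂/∂zₙ`  (coordinates are `0`-indexed: `zₖ = X ⟨k-1,_⟩`). -/
noncomputable def U (n : ℕ) :
    Derivation ℂ (MvPolynomial (Fin n) ℂ) (MvPolynomial (Fin n) ℂ) :=
  MvPolynomial.mkDerivation ℂ (fun i => if (i : ℕ) = n - 1 then 1 else 0)

/-- `V′ = ∂/∂zₙ + zₙ⁵ ∂/∂z_{n−1} + zₙ² z_{n−1}⁵ ∂/∂z_{n−2} + ⋯ + zₙ² z_{n−1}² ⋯ z₃² z₂⁵ ∂/∂z₁`,
i.e. `V′(zₙ) = 1` and `V′(zₖ) = zₙ² z_{n−1}² ⋯ z_{k+2}² · z_{k+1}⁵` for `1 ≤ k ≤ n−1`. -/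
noncomputable def V' (n : ℕ) :
    Derivation ℂ (MvPolynomial (Fin n) ℂ) (MvPolynomial (Fin n) ℂ) :=
  MvPolynomial.mkDerivation ℂ (fun i =>
    if h : (i : ℕ) + 1 < n then
      (∏ j ∈ Finset.univ.filter (fun j : Fin n => (i : ℕ) + 1 < (j : ℕ)), (X j) ^ 2) *
        (X (⟨(i : ℕ) + 1, h⟩ : Fin n)) ^ 5
    else 1)

/-- `V″ = ∂/∂z₁ + z₁⁵ ∂/∂z₂ + z₁² z₂⁵ ∂/∂z₃ + ⋯ + z₁² z₂² ⋯ z_{n−2}² z_{n−1}⁵ ∂/∂zₙ`,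
i.e. `V″(z₁) = 1` and `V″(zₖ) = z₁² z₂² ⋯ z_{k−2}² · z_{k−1}⁵` for `2 ≤ k ≤ n`. -/
noncomputable def V'' (n : ℕ) :
    Derivation ℂ (MvPolynomial (Fin n) ℂ) (MvPolynomial (Fin n) ℂ) :=
  MvPolynomial.mkDerivation ℂ (fun i =>
    if h : 0 < (i : ℕ) then
      (∏ j ∈ Finset.univ.filter (fun j : Fin n => (j : ℕ) < (i : ℕ) - 1), (X j) ^ 2) *
        (X (⟨(i : ℕ) - 1, lt_of_le_of_lt (Nat.sub_le _ _) i.isLt⟩ : Fin n)) ^ 5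
    else 1)

section Aux

private lemma der_eq_pderiv (n : ℕ) (k : Fin n) : der n 1 k = pderiv k := by
  rw [der, pderiv_def]

private lemma bracket_pderiv (n : ℕ) (m : Fin n) (c : Fin n → MvPolynomial (Fin n) ℂ) :
    ⁅(pderiv m : Derivation ℂ (MvPolynomial (Fin n) ℂ) (MvPolynomial (Fin n) ℂ)),
      mkDerivation ℂ c⁆ = mkDerivation ℂ (fun i => pderiv m (c i)) := by
  apply derivation_ext
  intro i
  rw [Derivation.commutator_apply, mkDerivation_X, mkDerivation_X]
  by_cases h : i = m
  · subst h; simp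
  · simp [h]

private lemma single_comp_pderiv (n : ℕ) (m k : Fin n) (p : MvPolynomial (Fin n) ℂ) :
    (fun i => pderiv m ((Pi.single k p : Fin n → MvPolynomial (Fin n) ℂ) i))
      = Pi.single k (pderiv m p) := by
  funext i
  by_cases h : i = k
  · subst h; simp
  · simp [Pi.single_eq_of_ne h]

/-- the exponent finsupp of `∏_{j > t} X j ^ 2`. -/
private noncomputable def Sig (n t : ℕ) : Fin n →₀ ℕ :=
  ∑ j ∈ Finset.univ.filter (fun j : Fin n => t < (j : ℕ)), Finsupp.single j 2

private lemma Sig_apply (n t : ℕ) (x : Fin n) :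
    Sig n t x = if t < (x : ℕ) then 2 else 0 := by
  classical
  rw [Sig, Finsupp.finset_sum_apply]
  simp [Finsupp.single_apply, Finset.sum_ite_eq', Finset.mem_filter]

private lemma prod_X_sq (n t : ℕ) :
    ∏ j ∈ Finset.univ.filter (fun j : Fin n => t < (j : ℕ)), (X j : MvPolynomial (Fin n) ℂ) ^ 2
      = monomial (Sig n t) 1 := by
  classical
  rw [Sig]
  generalize Finset.univ.filter (fun j : Fin n => t < (j : ℕ)) = A
  induction A using Finset.cons_induction with
  | empty => simp
  | cons a A ha ih =>
      rw [Finset.prod_cons, Finset.sum_cons, ih, X_pow_eq_monomial, monomial_mul, one_mul]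

private lemma pd0 {n : ℕ} (m : Fin n) (s : Fin n →₀ ℕ) (a : ℂ) (h : s m = 0) :
    pderiv m (monomial s a) = 0 := by
  rw [pderiv_monomial, h]; simp

private lemma pd2 {n : ℕ} (m : Fin n) (s : Fin n →₀ ℕ) (a : ℂ) (h : s m = 2) :
    pderiv m (pderiv m (monomial s a)) = monomial (s - Finsupp.single m 2) (a * 2) := by
  rw [pderiv_monomial, h, pderiv_monomial, Finsupp.tsub_apply, h, Finsupp.single_eq_same,
    tsub_tsub, ← Finsupp.single_add]
  norm_num

private lemma pd3 {n : ℕ} (m : Fin n) (s : Fin n →₀ ℕ) (a : ℂ) (h : s m = 2) :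
    pderiv m (pderiv m (pderiv m (monomial s a))) = 0 := by
  rw [pd2 m s a h, pd0]
  rw [Finsupp.tsub_apply, h, Finsupp.single_eq_same]

private lemma pdstep {n : ℕ} (m : Fin n) (u : Fin n →₀ ℕ) (a : ℂ) (h : u m = 0) (b : ℕ) :
    pderiv m (monomial (u + Finsupp.single m (b + 1)) a)
      = monomial (u + Finsupp.single m b) (a * (b + 1)) := by
  have h1 : u + Finsupp.single m (b + 1) - Finsupp.single m 1 = u + Finsupp.single m b := by
    ext x
    rw [Finsupp.tsub_apply, Finsupp.add_apply, Finsupp.add_apply, Finsupp.single_apply,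
      Finsupp.single_apply, Finsupp.single_apply]
    by_cases hx : m = x
    · subst hx; simp [h]
    · simp [hx]
  have h2 : (u + Finsupp.single m (b + 1)) m = b + 1 := by
    rw [Finsupp.add_apply, h, Finsupp.single_eq_same, zero_add]
  rw [pderiv_monomial, h1, h2]
  congr 1
  push_cast
  ring

private lemma pd5 {n : ℕ} (m : Fin n) (u : Fin n →₀ ℕ) (a : ℂ) (h : u m = 0) :
    pderiv m (pderiv m (pderiv m (pderiv m (pderiv m
        (monomial (u + Finsupp.single m 5) a)))))
      = monomial u (a * 120) := by
  rw [show (5:ℕ) = 4 + 1 from rfl, pdstep m u a h, show (4:ℕ) = 3 + 1 from rfl,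
    pdstep m u _ h, show (3:ℕ) = 2 + 1 from rfl, pdstep m u _ h,
    show (2:ℕ) = 1 + 1 from rfl, pdstep m u _ h, show (1:ℕ) = 0 + 1 from rfl,
    pdstep m u _ h, Finsupp.single_zero, add_zero]
  congr 1
  push_cast
  ring

private lemma mkDer_smul (n : ℕ) (a : ℂ) (c : Fin n → MvPolynomial (Fin n) ℂ) :
    mkDerivation ℂ (a • c) = a • mkDerivation ℂ c := by
  apply derivation_ext
  intro i
  rw [mkDerivation_X, Derivation.smul_apply, mkDerivation_X]
  rfl

end Aux

/-- For every `n ≥ 2` and every `k`, the coordinate derivation `∂/∂zₖ` lies in the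
smallest Lie subalgebra of the derivations of `ℂ[z₁,…,zₙ]` containing `U`, `V′`, `V″`. -/
theorem pderiv_mem_lieSpan_UV'V'' (n : ℕ) (hn : 2 ≤ n) (k : Fin n) :
    der n 1 k ∈
      LieSubalgebra.lieSpan ℂ (Derivation ℂ (MvPolynomial (Fin n) ℂ) (MvPolynomial (Fin n) ℂ))
        {U n, V' n, V'' n} := by
  classical
  set S := LieSubalgebra.lieSpan ℂ
      (Derivation ℂ (MvPolynomial (Fin n) ℂ) (MvPolynomial (Fin n) ℂ)) {U n, V' n, V'' n} with hS
  suffices H : ∀ d : ℕ, ∀ k : Fin n, n - 1 - (k : ℕ) ≤ d → der n 1 k ∈ S from H _ k le_rfl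
  intro d
  induction d with
  | zero =>
      intro k hk
      have hk' : (k : ℕ) = n - 1 := by have := k.isLt; omega
      have : der n 1 k = U n := by
        rw [der, U]
        congr 1
        funext i
        by_cases h : (i : ℕ) = n - 1
        · have : i = k := Fin.ext (by omega)
          subst this
          simp [h]
        · have : i ≠ k := fun he => h (by rw [he, hk'])
          simp [Pi.single_eq_of_ne this, h]
      rw [this]
      exact LieSubalgebra.subset_lieSpan (by simp)
  | succ d ih =>
      intro k hk
      by_cases hk' : n - 1 - (k : ℕ) ≤ d
      · exact ih k hk'
      have hklt : (k : ℕ) + 1 < n := by have := k.isLt; omega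
      have hIH : ∀ j : Fin n, (k : ℕ) < (j : ℕ) → (pderiv j :
          Derivation ℂ (MvPolynomial (Fin n) ℂ) (MvPolynomial (Fin n) ℂ)) ∈ S := by
        intro j hj
        rw [← der_eq_pderiv]
        exact ih j (by have := j.isLt; omega)
      have hV' : V' n ∈ S := LieSubalgebra.subset_lieSpan (by simp)
      -- Phase A : bracket 5 times with ∂_{k+1}
      set m : Fin n := ⟨(k : ℕ) + 1, hklt⟩ with hm
      have hmv : (m : ℕ) = (k : ℕ) + 1 := rfl
      have hPm : (pderiv m : Derivation ℂ (MvPolynomial (Fin n) ℂ)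
          (MvPolynomial (Fin n) ℂ)) ∈ S := hIH m (by rw [hmv]; omega)
      have hA : ⁅(pderiv m : Derivation ℂ (MvPolynomial (Fin n) ℂ) (MvPolynomial (Fin n) ℂ)),
            ⁅(pderiv m : Derivation ℂ (MvPolynomial (Fin n) ℂ) (MvPolynomial (Fin n) ℂ)),
            ⁅(pderiv m : Derivation ℂ (MvPolynomial (Fin n) ℂ) (MvPolynomial (Fin n) ℂ)),
            ⁅(pderiv m : Derivation ℂ (MvPolynomial (Fin n) ℂ) (MvPolynomial (Fin n) ℂ)),
            ⁅(pderiv m : Derivation ℂ (MvPolynomial (Fin n) ℂ) (MvPolynomial (Fin n) ℂ)),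
              V' n⁆⁆⁆⁆⁆
          = mkDerivation ℂ (Pi.single k (monomial (Sig n ((k : ℕ) + 1)) (120 : ℂ))) := by
        rw [V', bracket_pderiv, bracket_pderiv, bracket_pderiv, bracket_pderiv, bracket_pderiv]
        refine congrArg _ (funext fun i => ?_)
        by_cases hi : (i : ℕ) + 1 < n
        · rw [dif_pos hi, prod_X_sq, X_pow_eq_monomial, monomial_mul, one_mul]
          by_cases hik : i = k
          · obtain rfl := hik
            have him : (⟨(i : ℕ) + 1, hi⟩ : Fin n) = m := rfl
            have hs0 : Sig n ((i : ℕ) + 1) m = 0 := by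
              rw [Sig_apply, hmv, if_neg (by omega)]
            rw [him, pd5 m _ _ hs0, Pi.single_eq_same, one_mul]
          · have hne : (⟨(i : ℕ) + 1, hi⟩ : Fin n) ≠ m := by
              intro h
              exact hik (Fin.ext (by
                have := congrArg (fun z : Fin n => (z : ℕ)) h
                simpa [hmv] using this))
            have hsingle : (Finsupp.single (⟨(i : ℕ) + 1, hi⟩ : Fin n) 5) m = 0 :=
              Finsupp.single_eq_of_ne' hne
            have hikv : (i : ℕ) ≠ (k : ℕ) := fun h => hik (Fin.ext h)
            rw [Pi.single_eq_of_ne hik]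
            by_cases hlt : (i : ℕ) < (k : ℕ)
            · have hs : ((Sig n ((i : ℕ) + 1) + Finsupp.single (⟨(i : ℕ) + 1, hi⟩ : Fin n) 5 :
                  Fin n →₀ ℕ)) m = 2 := by
                rw [Finsupp.add_apply, Sig_apply, hsingle, hmv, if_pos (by omega)]
              rw [pd3 m _ _ hs, map_zero, map_zero]
            · have hs : ((Sig n ((i : ℕ) + 1) + Finsupp.single (⟨(i : ℕ) + 1, hi⟩ : Fin n) 5 :
                  Fin n →₀ ℕ)) m = 0 := by
                rw [Finsupp.add_apply, Sig_apply, hsingle, hmv, if_neg (by omega)]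
              rw [pd0 m _ _ hs, map_zero, map_zero, map_zero, map_zero]
        · rw [dif_neg hi]
          have hik : i ≠ k := fun h => hi (h ▸ hklt)
          rw [Pi.single_eq_of_ne hik]
          rw [Derivation.map_one_eq_zero, map_zero, map_zero, map_zero, map_zero]
      have hAmem : mkDerivation ℂ
          (Pi.single k (monomial (Sig n ((k : ℕ) + 1)) (120 : ℂ))) ∈ S := by
        rw [← hA]
        exact S.lie_mem hPm (S.lie_mem hPm (S.lie_mem hPm (S.lie_mem hPm (S.lie_mem hPm hV'))))
      -- Phase B : kill the squares one by one
      have hB : ∀ t : ℕ, (k : ℕ) + 1 ≤ t → t ≤ n - 1 →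
          mkDerivation ℂ (Pi.single k (monomial (Sig n t)
            ((120 : ℂ) * 2 ^ (t - ((k : ℕ) + 1))))) ∈ S := by
        intro t ht
        induction t, ht using Nat.le_induction with
        | base => intro _; simpa using hAmem
        | succ t ht iht =>
            intro ht1
            have hmem := iht (by omega)
            set m' : Fin n := ⟨t + 1, by omega⟩ with hm'
            have hm'v : (m' : ℕ) = t + 1 := rfl
            have hPm' : (pderiv m' : Derivation ℂ (MvPolynomial (Fin n) ℂ)
                (MvPolynomial (Fin n) ℂ)) ∈ S := hIH m' (by rw [hm'v]; omega)
            have hstep : ⁅(pderiv m' : Derivation ℂ (MvPolynomial (Fin n) ℂ)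
                  (MvPolynomial (Fin n) ℂ)),
                ⁅(pderiv m' : Derivation ℂ (MvPolynomial (Fin n) ℂ) (MvPolynomial (Fin n) ℂ)),
                mkDerivation ℂ (Pi.single k (monomial (Sig n t)
                  ((120 : ℂ) * 2 ^ (t - ((k : ℕ) + 1)))))⁆⁆
                = mkDerivation ℂ (Pi.single k (monomial (Sig n (t + 1))
                  ((120 : ℂ) * 2 ^ (t + 1 - ((k : ℕ) + 1))))) := by
              rw [bracket_pderiv, single_comp_pderiv, bracket_pderiv, single_comp_pderiv]
              have hs : Sig n t m' = 2 := by
                rw [Sig_apply, hm'v, if_pos (by omega)]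
              rw [pd2 m' _ _ hs]
              have hexp : Sig n t - Finsupp.single m' 2 = Sig n (t + 1) := by
                ext x
                rw [Finsupp.tsub_apply, Sig_apply, Sig_apply, Finsupp.single_apply]
                by_cases hx : m' = x
                · obtain rfl := hx
                  rw [hm'v, if_pos (by omega), if_pos rfl, if_neg (by omega)]
                · have hxv : (x : ℕ) ≠ t + 1 := by
                    intro h
                    exact hx (Fin.ext (by rw [hm'v, h]))
                  rw [if_neg hx]
                  split_ifs <;> omega
              have hcoef : (120 : ℂ) * 2 ^ (t - ((k : ℕ) + 1)) * 2
                  = (120 : ℂ) * 2 ^ (t + 1 - ((k : ℕ) + 1)) := by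
                have he : t + 1 - ((k : ℕ) + 1) = (t - ((k : ℕ) + 1)) + 1 := by omega
                rw [he, pow_succ]; ring
              rw [hexp, hcoef]
            rw [← hstep]
            exact S.lie_mem hPm' (S.lie_mem hPm' hmem)
      -- conclude at t = n - 1
      have hfin := hB (n - 1) (by omega) le_rfl
      have hSigEmpty : Sig n (n - 1) = 0 := by
        ext x
        rw [Sig_apply, if_neg (by have := x.isLt; omega)]
        rfl
      rw [hSigEmpty] at hfin
      set a : ℂ := (120 : ℂ) * 2 ^ (n - 1 - ((k : ℕ) + 1)) with ha
      have ha0 : a ≠ 0 := by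
        rw [ha]
        exact mul_ne_zero (by norm_num) (pow_ne_zero _ two_ne_zero)
      have hsc : mkDerivation ℂ (Pi.single k (monomial (0 : Fin n →₀ ℕ) a))
          = a • der n 1 k := by
        rw [der, ← mkDer_smul]
        congr 1
        funext i
        by_cases h : i = k
        · subst h
          simp only [Pi.single_eq_same, Pi.smul_apply]
          rw [monomial_zero', smul_eq_C_mul, mul_one]
        · simp [Pi.single_eq_of_ne h]
      rw [hsc] at hfin
      have := S.smul_mem a⁻¹ hfin
      rwa [smul_smul, inv_mul_cancel₀ ha0, one_smul] at this
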